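/- Let s > 0. For every z ∈ ℝ^n and every u ∈ (0,∞)^n, the quantity J := s² Σ_{i,j=1, i≠j}^n π_i a_{ij} u_j^s u_i^{s-2} z_i² + s² Σ_{i,j=1, i≠j}^n π_i a_{ij} (u_i u_j)^{s-1} z_i z_j satisfies J ≥ −(s²/2) Σ_{i,j=1, i≠j}^n (√(π_i a_{ij}) − √(π_j a_{ji}))² u_i^{2(s-1)} z_i². -/

import Mathlib

open Finset Real

noncomputable section

/-- The diffusion matrix `A(u)`: `A_{ij}(u) = δ_{ij}(a_{i0} + Σ_k a_{ik} u_k^s) + s a_{ij} u_i u_j^{s-1}`. -/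
def matA (n : ℕ) (s : ℝ) (a0 : Fin n → ℝ) (a : Fin n → Fin n → ℝ) (u : Fin n → ℝ) :
    Matrix (Fin n) (Fin n) ℝ :=
  Matrix.of fun i j =>
    (if i = j then a0 i + ∑ k, a i k * u k ^ s else 0) + s * a i j * u i * u j ^ (s - 1)

/-- The entropy Hessian `H(u)`: `H_{ij}(u) = δ_{ij} s π_i u_i^{s-2}`. -/
def matH (n : ℕ) (s : ℝ) (P : Fin n → ℝ) (u : Fin n → ℝ) : Matrix (Fin n) (Fin n) ℝ :=
  Matrix.of fun i j => if i = j then s * P i * u i ^ (s - 2) else 0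

/-- The quadratic form `zᵀ M z`. -/
def quad (n : ℕ) (M : Matrix (Fin n) (Fin n) ℝ) (z : Fin n → ℝ) : ℝ :=
  ∑ i, ∑ j, z i * M i j * z j

lemma key_aux (p q t x y : ℝ) (ht : 0 < t) :
    0 ≤ p^2*t*x^2 + q^2*t⁻¹*y^2 + (p^2+q^2)*x*y + (1/2)*(p-q)^2*(x^2+y^2) := by
  have h1 : q^2*t⁻¹*y^2 * t = q^2*y^2 := by field_simp
  nlinarith [sq_nonneg (p*t*x - q*y), sq_nonneg (p*t*x + q*y), sq_nonneg (p*x+q*y),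
    sq_nonneg (p*x-q*y), sq_nonneg (x+y), sq_nonneg (x-y), mul_pos ht ht,
    sq_nonneg ((p-q)*(x+y)), sq_nonneg ((p-q)*(x-y)), mul_nonneg (sq_nonneg (p-q)) ht.le]

lemma key2_aux (pi aij pj aji ui uj zi zj s : ℝ)
    (hai : 0 ≤ aij) (haj : 0 ≤ aji) (hpi : 0 < pi) (hpj : 0 < pj)
    (hui : 0 < ui) (huj : 0 < uj) :
    0 ≤ (pi*aij*uj^s*ui^(s-2)*zi^2 + pi*aij*(ui*uj)^(s-1)*zi*zj
          + (1/2)*((Real.sqrt (pi*aij) - Real.sqrt (pj*aji))^2*ui^(2*(s-1))*zi^2))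
      + (pj*aji*ui^s*uj^(s-2)*zj^2 + pj*aji*(uj*ui)^(s-1)*zj*zi
          + (1/2)*((Real.sqrt (pj*aji) - Real.sqrt (pi*aij))^2*uj^(2*(s-1))*zj^2)) := by
  have hsq : ∀ a : ℝ, 0 < a → (a^(s-1))^2 = a^(2*(s-1)) := by
    intro a hA
    rw [← Real.rpow_natCast (a^(s-1)) 2, ← Real.rpow_mul hA.le]
    norm_num [mul_comm]
  have hid : ∀ a b : ℝ, 0 < a → 0 < b → b^s * a^(s-2) = (b/a)^s * (a^(s-1))^2 := by
    intro a b hA hB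
    rw [hsq a hA, Real.div_rpow hB.le hA.le, div_mul_eq_mul_div, mul_div_assoc,
      ← Real.rpow_sub hA]
    congr 1
    ring
  set p := Real.sqrt (pi*aij) with hp
  set q := Real.sqrt (pj*aji) with hq
  have hp2 : p^2 = pi*aij := Real.sq_sqrt (by positivity)
  have hq2 : q^2 = pj*aji := Real.sq_sqrt (by positivity)
  set t : ℝ := (uj/ui)^s with hts
  have hts' : 0 < t := Real.rpow_pos_of_pos (by positivity) s
  have htinv : t⁻¹ = (ui/uj)^s := by
    rw [hts, ← Real.inv_rpow (by positivity), inv_div]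
  have e1 : uj^s * ui^(s-2) = t * (ui^(s-1))^2 := hid ui uj hui huj
  have e2 : ui^s * uj^(s-2) = t⁻¹ * (uj^(s-1))^2 := by
    rw [htinv]; exact hid uj ui huj hui
  have ec : (ui*uj)^(s-1) = ui^(s-1) * uj^(s-1) := Real.mul_rpow hui.le huj.le
  have ec' : (uj*ui)^(s-1) = ui^(s-1) * uj^(s-1) := by rw [mul_comm uj ui]; exact ec
  have A1 : pi*aij*uj^s*ui^(s-2)*zi^2 = p^2*t*(ui^(s-1)*zi)^2 := by
    rw [← hp2]; linear_combination (p^2*zi^2) * e1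
  have A2 : pj*aji*ui^s*uj^(s-2)*zj^2 = q^2*t⁻¹*(uj^(s-1)*zj)^2 := by
    rw [← hq2]; linear_combination (q^2*zj^2) * e2
  have B1 : pi*aij*(ui*uj)^(s-1)*zi*zj = p^2*(ui^(s-1)*zi)*(uj^(s-1)*zj) := by
    rw [← hp2]; linear_combination (p^2*zi*zj) * ec
  have B2 : pj*aji*(uj*ui)^(s-1)*zj*zi = q^2*(ui^(s-1)*zi)*(uj^(s-1)*zj) := by
    rw [← hq2]; linear_combination (q^2*zi*zj) * ec'
  have C1 : (p - q)^2*ui^(2*(s-1))*zi^2 = (p-q)^2*(ui^(s-1)*zi)^2 := by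
    rw [← hsq ui hui]; ring
  have C2 : (q - p)^2*uj^(2*(s-1))*zj^2 = (p-q)^2*(uj^(s-1)*zj)^2 := by
    rw [← hsq uj huj]; ring
  rw [A1, A2, B1, B2, C1, C2]
  have K := key_aux p q t (ui^(s-1)*zi) (uj^(s-1)*zj) hts'
  linarith [K]

lemma sym_sum_nonneg_aux {n : ℕ} (h : Fin n → Fin n → ℝ)
    (hsym : ∀ i j, i ≠ j → 0 ≤ h i j + h j i) :
    0 ≤ ∑ i, ∑ j ∈ Finset.univ.erase i, h i j := by
  set H : Fin n → Fin n → ℝ := fun i j => if i = j then 0 else h i j with hH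
  have e1 : ∑ i, ∑ j ∈ Finset.univ.erase i, h i j = ∑ i, ∑ j, H i j := by
    refine Finset.sum_congr rfl fun i _ => ?_
    rw [← Finset.sum_erase Finset.univ (by simp [hH] : H i i = 0)]
    refine Finset.sum_congr rfl fun j hj => ?_
    simp only [Finset.mem_erase] at hj
    simp [hH, (Ne.symm hj.1)]
  rw [e1]
  have e2 : ∑ i, ∑ j, H i j = ∑ i, ∑ j, H j i := Finset.sum_comm
  have e3 : 0 ≤ ∑ i : Fin n, ∑ j : Fin n, (H i j + H j i) := by
    refine Finset.sum_nonneg fun i _ => Finset.sum_nonneg fun j _ => ?_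
    rcases eq_or_ne i j with rfl | hij
    · simp [hH]
    · simpa [hH, hij, hij.symm] using hsym i j hij
  simp only [Finset.sum_add_distrib] at e3
  rw [← e2] at e3
  linarith

theorem stmt1 (n : ℕ) (hn : 1 ≤ n) (s : ℝ) (hs : 0 < s)
    (a : Fin n → Fin n → ℝ) (P : Fin n → ℝ)
    (ha : ∀ i j, 0 ≤ a i j) (hP : ∀ i, 0 < P i)
    (z u : Fin n → ℝ) (hu : ∀ i, 0 < u i) :
    -(s ^ 2 / 2) * ∑ i, ∑ j ∈ Finset.univ.erase i,
        (Real.sqrt (P i * a i j) - Real.sqrt (P j * a j i)) ^ 2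
          * u i ^ (2 * (s - 1)) * z i ^ 2
    ≤ s ^ 2 * (∑ i, ∑ j ∈ Finset.univ.erase i,
          P i * a i j * u j ^ s * u i ^ (s - 2) * z i ^ 2)
      + s ^ 2 * ∑ i, ∑ j ∈ Finset.univ.erase i,
          P i * a i j * (u i * u j) ^ (s - 1) * z i * z j := by
  set h : Fin n → Fin n → ℝ := fun i j =>
      s^2*(P i * a i j * u j ^ s * u i ^ (s-2) * z i ^ 2)
      + s^2*(P i * a i j * (u i * u j) ^ (s-1) * z i * z j)
      + (s^2/2)*((Real.sqrt (P i * a i j) - Real.sqrt (P j * a j i))^2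
          * u i ^ (2*(s-1)) * z i ^ 2) with hh
  have main : 0 ≤ ∑ i, ∑ j ∈ Finset.univ.erase i, h i j := by
    refine sym_sum_nonneg_aux h fun i j hij => ?_
    have K := key2_aux (P i) (a i j) (P j) (a j i) (u i) (u j) (z i) (z j) s
      (ha i j) (ha j i) (hP i) (hP j) (hu i) (hu j)
    have K2 := mul_nonneg (sq_nonneg s) K
    simp only [hh]
    nlinarith [K2]
  have heq : ∑ i, ∑ j ∈ Finset.univ.erase i, h i j
      = s ^ 2 * (∑ i, ∑ j ∈ Finset.univ.erase i,
            P i * a i j * u j ^ s * u i ^ (s - 2) * z i ^ 2)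
        + s ^ 2 * (∑ i, ∑ j ∈ Finset.univ.erase i,
            P i * a i j * (u i * u j) ^ (s - 1) * z i * z j)
        + (s ^ 2 / 2) * (∑ i, ∑ j ∈ Finset.univ.erase i,
            (Real.sqrt (P i * a i j) - Real.sqrt (P j * a j i)) ^ 2
              * u i ^ (2 * (s - 1)) * z i ^ 2) := by
    simp only [Finset.mul_sum, ← Finset.sum_add_distrib]
    rfl
  linarith [main, heq]
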